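/- Let B : ℓ² → ℓ² be defined by B(x) = x + αT(x) with |α| ≤ 2/√17, and for m ≥ 1 set B_m(x) := m B(x/m) = x + α m T(x/m). Then each B_m is Lipschitz continuous and monotone. -/

import Mathlib

/-- The piecewise linear functions `f n` from the paper. -/
noncomputable def f (n : ℕ) (t : ℝ) : ℝ :=
  if t ≤ (2:ℝ)^(-(n:ℤ)-1) ∨ (2:ℝ)^(-(n:ℤ)+2) ≤ t then 0
  else if t ≤ (2:ℝ)^(-(n:ℤ)) then 2*(t - (2:ℝ)^(-(n:ℤ)-1))
  else if t ≤ (2:ℝ)^(-(n:ℤ)+1) then (2:ℝ)^(-(n:ℤ))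
  else (1/2)*((2:ℝ)^(-(n:ℤ)+2) - t)

/-- The Hilbert space ℓ² of square-summable real sequences. -/
noncomputable abbrev l2 := lp (fun _ : ℕ => ℝ) 2

/-! ### Auxiliary clamp function -/

noncomputable def cl (a b x : ℝ) : ℝ := min (max x a) b

lemma cl_mono (a b : ℝ) {s t : ℝ} (h : s ≤ t) : cl a b s ≤ cl a b t :=
  min_le_min (max_le_max h le_rfl) le_rfl

lemma cl_lip (a b : ℝ) {s t : ℝ} (h : s ≤ t) : cl a b t - cl a b s ≤ t - s := by
  unfold cl; simp only [min_def, max_def]; split_ifs <;> (try push_neg at *) <;> linarith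

lemma cl_add {a b c : ℝ} (hab : a ≤ b) (hbc : b ≤ c) (x : ℝ) :
    cl a b x + cl b c x = cl a c x + b := by
  unfold cl; simp only [min_def, max_def]; split_ifs <;> (try push_neg at *) <;> linarith

lemma cl_self (a x : ℝ) : cl a a x = a :=
  min_eq_right (le_max_right _ _)

lemma clD_add {a b c : ℝ} (hab : a ≤ b) (hbc : b ≤ c) (s t : ℝ) :
    (cl a b t - cl a b s) + (cl b c t - cl b c s) = cl a c t - cl a c s := by
  have h1 := cl_add hab hbc t
  have h2 := cl_add hab hbc s
  linarith

/-- Telescoping bound for abutting clamps. -/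
lemma sum_clD_le {s t : ℝ} (hst : s ≤ t) (a : ℕ → ℝ) (ha : ∀ k, a (k+1) ≤ a k)
    (S : Finset ℕ) :
    ∑ n ∈ S, (cl (a (n+1)) (a n) t - cl (a (n+1)) (a n) s) ≤ t - s := by
  obtain ⟨N, hN⟩ := S.exists_nat_subset_range
  have hmono : Antitone a := antitone_nat_of_succ_le ha
  have hrange : ∀ M : ℕ, ∑ n ∈ Finset.range M,
      (cl (a (n+1)) (a n) t - cl (a (n+1)) (a n) s)
      = cl (a M) (a 0) t - cl (a M) (a 0) s := by
    intro M
    induction M with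
    | zero => simp [cl_self]
    | succ M ih =>
        rw [Finset.sum_range_succ, ih, add_comm]
        exact clD_add (ha M) (hmono (Nat.zero_le M)) s t
  calc ∑ n ∈ S, (cl (a (n+1)) (a n) t - cl (a (n+1)) (a n) s)
      ≤ ∑ n ∈ Finset.range N, (cl (a (n+1)) (a n) t - cl (a (n+1)) (a n) s) :=
        Finset.sum_le_sum_of_subset_of_nonneg hN
          (fun i _ _ => sub_nonneg.2 (cl_mono _ _ hst))
    _ = cl (a N) (a 0) t - cl (a N) (a 0) s := hrange N
    _ ≤ t - s := cl_lip _ _ hst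

/-! ### Structure of `f` -/

noncomputable def pt (k : ℕ) : ℝ := (2:ℝ)^(-(k:ℤ)-1)
noncomputable def qt (k : ℕ) : ℝ := (2:ℝ)^(-(k:ℤ)+1)

lemma pt_anti (k : ℕ) : pt (k+1) ≤ pt k := by
  unfold pt; apply zpow_le_zpow_right₀ one_le_two; push_cast; omega

lemma qt_anti (k : ℕ) : qt (k+1) ≤ qt k := by
  unfold qt; apply zpow_le_zpow_right₀ one_le_two; push_cast; omega

lemma f_eq (n : ℕ) (t : ℝ) :
    f n t = 2 * (cl ((2:ℝ)^(-(n:ℤ)-1)) ((2:ℝ)^(-(n:ℤ))) t - (2:ℝ)^(-(n:ℤ)-1))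
          - (1/2) * (cl ((2:ℝ)^(-(n:ℤ)+1)) ((2:ℝ)^(-(n:ℤ)+2)) t - (2:ℝ)^(-(n:ℤ)+1)) := by
  set p1 := (2:ℝ)^(-(n:ℤ)-1) with hp1
  set p2 := (2:ℝ)^(-(n:ℤ)) with hp2
  set p3 := (2:ℝ)^(-(n:ℤ)+1) with hp3
  set p4 := (2:ℝ)^(-(n:ℤ)+2) with hp4
  have e1 : p2 = p1 * 2 := by rw [hp1, hp2, ← zpow_add_one₀ (two_ne_zero)]; congr 1; ring
  have e2 : p3 = p2 * 2 := by rw [hp2, hp3, ← zpow_add_one₀ (two_ne_zero)]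
  have e3 : p4 = p3 * 2 := by rw [hp3, hp4, ← zpow_add_one₀ (two_ne_zero)]; congr 1; ring
  have e4 : (0:ℝ) < p1 := by rw [hp1]; positivity
  unfold f cl
  rcases le_or_gt t p1 with h1 | h1
  · rw [if_pos (Or.inl h1), max_eq_right h1, min_eq_left (by linarith),
      max_eq_right (by linarith : t ≤ p3), min_eq_left (by linarith)]
    ring
  · rcases le_or_gt t p2 with h2 | h2
    · rw [if_neg (by push_neg; constructor <;> linarith), if_pos h2,
        max_eq_left h1.le, min_eq_left h2,
        max_eq_right (by linarith : t ≤ p3), min_eq_left (by linarith)]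
      ring
    · rcases le_or_gt t p3 with h3 | h3
      · rw [if_neg (by push_neg; constructor <;> linarith), if_neg (by linarith), if_pos h3,
          max_eq_left (by linarith : p1 ≤ t), min_eq_right (by linarith),
          max_eq_right h3, min_eq_left (by linarith)]
        linarith
      · rcases lt_or_ge t p4 with h4 | h4
        · rw [if_neg (by push_neg; constructor <;> linarith), if_neg (by linarith),
            if_neg (by linarith),
            max_eq_left (by linarith : p1 ≤ t), min_eq_right (by linarith),
            max_eq_left h3.le, min_eq_left h4.le]
          linarith
        · rw [if_pos (Or.inr h4),
            max_eq_left (by linarith : p1 ≤ t), min_eq_right (by linarith),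
            max_eq_left (by linarith : p3 ≤ t), min_eq_right h4]
          linarith

lemma f_succ (n : ℕ) (t : ℝ) :
    f (n+1) t = 2 * (cl (pt (n+1)) (pt n) t - pt (n+1))
          - (1/2) * (cl (qt (n+1)) (qt n) t - qt (n+1)) := by
  have h := f_eq (n+1) t
  simp only [pt, qt]
  rw [show (-(n:ℤ)-1) = (-((n+1:ℕ):ℤ)) from by push_cast; ring,
    show (-(n:ℤ)+1) = (-((n+1:ℕ):ℤ)+2) from by push_cast; ring]
  exact h

/-! ### The key square-sum estimate -/

lemma key_sum {s t : ℝ} (hst : s ≤ t) (S : Finset ℕ) :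
    ∑ n ∈ S, (f (n+1) t - f (n+1) s)^2 ≤ (17/4)*(t-s)^2 := by
  have hterm : ∀ n : ℕ, (f (n+1) t - f (n+1) s)^2 ≤
      4*(t-s)*(cl (pt (n+1)) (pt n) t - cl (pt (n+1)) (pt n) s)
      + (1/4)*(t-s)*(cl (qt (n+1)) (qt n) t - cl (qt (n+1)) (qt n) s) := by
    intro n
    have hu0 : 0 ≤ cl (pt (n+1)) (pt n) t - cl (pt (n+1)) (pt n) s :=
      sub_nonneg.2 (cl_mono _ _ hst)
    have hv0 : 0 ≤ cl (qt (n+1)) (qt n) t - cl (qt (n+1)) (qt n) s :=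
      sub_nonneg.2 (cl_mono _ _ hst)
    have hu1 : cl (pt (n+1)) (pt n) t - cl (pt (n+1)) (pt n) s ≤ t - s := cl_lip _ _ hst
    have hv1 : cl (qt (n+1)) (qt n) t - cl (qt (n+1)) (qt n) s ≤ t - s := cl_lip _ _ hst
    have hf : f (n+1) t - f (n+1) s =
        2*(cl (pt (n+1)) (pt n) t - cl (pt (n+1)) (pt n) s)
        - (1/2)*(cl (qt (n+1)) (qt n) t - cl (qt (n+1)) (qt n) s) := by
      rw [f_succ n t, f_succ n s]; ring
    rw [hf]
    nlinarith [mul_nonneg hu0 hv0,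
      mul_nonneg (sub_nonneg.2 hu1) hu0, mul_nonneg (sub_nonneg.2 hv1) hv0]
  calc ∑ n ∈ S, (f (n+1) t - f (n+1) s)^2
      ≤ ∑ n ∈ S, (4*(t-s)*(cl (pt (n+1)) (pt n) t - cl (pt (n+1)) (pt n) s)
        + (1/4)*(t-s)*(cl (qt (n+1)) (qt n) t - cl (qt (n+1)) (qt n) s)) :=
        Finset.sum_le_sum (fun n _ => hterm n)
    _ = 4*(t-s)*(∑ n ∈ S, (cl (pt (n+1)) (pt n) t - cl (pt (n+1)) (pt n) s))
        + (1/4)*(t-s)*(∑ n ∈ S, (cl (qt (n+1)) (qt n) t - cl (qt (n+1)) (qt n) s)) := by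
        rw [Finset.sum_add_distrib, ← Finset.mul_sum, ← Finset.mul_sum]
    _ ≤ 4*(t-s)*(t-s) + (1/4)*(t-s)*(t-s) := by
        have h1 := sum_clD_le hst pt pt_anti S
        have h2 := sum_clD_le hst qt qt_anti S
        have ht : (0:ℝ) ≤ t - s := by linarith
        have := mul_le_mul_of_nonneg_left h1 (by linarith : (0:ℝ) ≤ 4*(t-s))
        have := mul_le_mul_of_nonneg_left h2 (by linarith : (0:ℝ) ≤ (1/4)*(t-s))
        linarith
    _ = (17/4)*(t-s)^2 := by ring

lemma norm_sq_le (v : l2) (s t : ℝ) (hv : ∀ n, v n = f (n+1) t - f (n+1) s) :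
    ‖v‖^2 ≤ (17/4)*(t-s)^2 := by
  have key' : ∀ S : Finset ℕ, ∑ n ∈ S, (v n)^2 ≤ (17/4)*(t-s)^2 := by
    intro S
    rcases le_total s t with h | h
    · calc ∑ n ∈ S, (v n)^2 = ∑ n ∈ S, (f (n+1) t - f (n+1) s)^2 :=
            Finset.sum_congr rfl (fun n _ => by rw [hv])
        _ ≤ (17/4)*(t-s)^2 := key_sum h S
    · calc ∑ n ∈ S, (v n)^2 = ∑ n ∈ S, (f (n+1) s - f (n+1) t)^2 :=
            Finset.sum_congr rfl (fun n _ => by rw [hv]; ring)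
        _ ≤ (17/4)*(s-t)^2 := key_sum h S
        _ = (17/4)*(t-s)^2 := by ring
  have hsummable : Summable (fun n => (v n)^2) :=
    summable_of_sum_le (fun n => sq_nonneg _) key'
  have hnorm : ‖v‖ ^ (2:ℝ) = ∑' n, ‖v n‖ ^ (2:ℝ) := by
    have := lp.norm_rpow_eq_tsum (p := 2) (by norm_num) v
    simpa using this
  have hcoe : (fun n : ℕ => ‖v n‖ ^ (2:ℝ)) = fun n => (v n)^2 := by
    funext n
    rw [show (2:ℝ) = ((2:ℕ):ℝ) by norm_num, Real.rpow_natCast, Real.norm_eq_abs, sq_abs]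
  have : ‖v‖^2 = ∑' n, (v n)^2 := by
    rw [show ‖v‖^2 = ‖v‖^(2:ℝ) by
      rw [show (2:ℝ) = ((2:ℕ):ℝ) by norm_num, Real.rpow_natCast], hnorm, hcoe]
  rw [this]
  exact Summable.tsum_le_of_sum_le hsummable key'

set_option maxHeartbeats 1000000 in
/-- Each `B_m x = x + α m T (x / m)` is Lipschitz continuous and monotone. -/
theorem Bm_lipschitz_monotone
    (T : l2 → l2) (hT : ∀ (x : l2) (n : ℕ), T x n = f (n + 1) ‖x‖)
    (α : ℝ) (hα : |α| ≤ 2 / Real.sqrt 17)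
    (m : ℕ) (hm : 1 ≤ m)
    (Bm : l2 → l2) (hBm : ∀ x : l2, Bm x = x + (α * m) • T ((m:ℝ)⁻¹ • x)) :
    (∃ K : ℝ, ∀ x y : l2, ‖Bm x - Bm y‖ ≤ K * ‖x - y‖) ∧
    (∀ x y : l2, (inner ℝ (Bm x - Bm y) (x - y) : ℝ) ≥ 0) := by
  have hm0 : (0:ℝ) < (m:ℝ) := by exact_mod_cast hm
  -- squared Lipschitz bound for T
  have hTsq : ∀ x y : l2, ‖T x - T y‖^2 ≤ (17/4)*(‖x‖ - ‖y‖)^2 := by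
    intro x y
    apply norm_sq_le (T x - T y) ‖y‖ ‖x‖
    intro n
    have : (T x - T y) n = T x n - T y n := by
      rw [lp.coeFn_sub]; rfl
    rw [this, hT, hT]
  -- α² ≤ 4/17
  have hα2 : α^2 ≤ 4/17 := by
    have h17 : Real.sqrt 17 > 0 := Real.sqrt_pos.2 (by norm_num)
    have h1 : |α|^2 ≤ (2 / Real.sqrt 17)^2 := by
      apply pow_le_pow_left₀ (abs_nonneg α) hα
    rw [sq_abs] at h1
    have h2 : (2 / Real.sqrt 17)^2 = 4/17 := by
      rw [div_pow, Real.sq_sqrt (by norm_num : (17:ℝ) ≥ 0)]; norm_num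
    linarith [h2 ▸ h1]
  -- key estimate
  have hkey : ∀ x y : l2, |α * m| * ‖T ((m:ℝ)⁻¹ • x) - T ((m:ℝ)⁻¹ • y)‖ ≤ ‖x - y‖ := by
    intro x y
    set u := T ((m:ℝ)⁻¹ • x) - T ((m:ℝ)⁻¹ • y) with hu
    have hsq : ‖u‖^2 ≤ (17/4)*(‖(m:ℝ)⁻¹ • x‖ - ‖(m:ℝ)⁻¹ • y‖)^2 := hTsq _ _
    have hdn : ‖(m:ℝ)⁻¹ • x - (m:ℝ)⁻¹ • y‖ = (m:ℝ)⁻¹ * ‖x - y‖ := by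
      rw [← smul_sub, norm_smul, Real.norm_eq_abs, abs_inv, Nat.abs_cast]
    have hd : (‖(m:ℝ)⁻¹ • x‖ - ‖(m:ℝ)⁻¹ • y‖)^2 ≤ ((m:ℝ)⁻¹ * ‖x - y‖)^2 := by
      rw [← hdn, ← sq_abs (‖(m:ℝ)⁻¹ • x‖ - ‖(m:ℝ)⁻¹ • y‖)]
      exact pow_le_pow_left₀ (abs_nonneg _) (abs_norm_sub_norm_le _ _) 2
    have hsq2 : (|α * m| * ‖u‖)^2 ≤ ‖x - y‖^2 := by
      have h1 : (|α * m| * ‖u‖)^2 = α^2 * (m:ℝ)^2 * ‖u‖^2 := by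
        rw [mul_pow, sq_abs, mul_pow]
      have h2 : ((m:ℝ)⁻¹ * ‖x - y‖)^2 = (m:ℝ)⁻¹^2 * ‖x - y‖^2 := by ring
      have hm2 : (m:ℝ)^2 * (m:ℝ)⁻¹^2 = 1 := by
        field_simp
      have hu2 : ‖u‖^2 ≤ (17/4) * ((m:ℝ)⁻¹^2 * ‖x - y‖^2) := by
        calc ‖u‖^2 ≤ (17/4)*(‖(m:ℝ)⁻¹ • x‖ - ‖(m:ℝ)⁻¹ • y‖)^2 := hsq
          _ ≤ (17/4)*(((m:ℝ)⁻¹ * ‖x - y‖)^2) := by linarith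
          _ = (17/4) * ((m:ℝ)⁻¹^2 * ‖x - y‖^2) := by ring
      rw [h1]
      have c1 : α^2 * (m:ℝ)^2 * ‖u‖^2 ≤ α^2 * (m:ℝ)^2 * ((17/4) * ((m:ℝ)⁻¹^2 * ‖x - y‖^2)) :=
        mul_le_mul_of_nonneg_left hu2 (by positivity)
      have c2 : α^2 * (m:ℝ)^2 * ((17/4) * ((m:ℝ)⁻¹^2 * ‖x - y‖^2))
          = (17/4) * α^2 * ((m:ℝ)^2 * (m:ℝ)⁻¹^2) * ‖x - y‖^2 := by ring
      rw [c2, hm2] at c1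
      have c3 : 0 ≤ (4/17 - α^2) * ‖x - y‖^2 :=
        mul_nonneg (by linarith) (sq_nonneg _)
      nlinarith
    have h0 : 0 ≤ |α * m| * ‖u‖ := mul_nonneg (abs_nonneg _) (norm_nonneg _)
    nlinarith [norm_nonneg (x - y)]
  constructor
  · refine ⟨2, fun x y => ?_⟩
    set u := T ((m:ℝ)⁻¹ • x) - T ((m:ℝ)⁻¹ • y) with hu
    have hdiff : Bm x - Bm y = (x - y) + (α * m) • u := by
      rw [hBm x, hBm y, hu, smul_sub]; abel
    have h1 : ‖Bm x - Bm y‖ ≤ ‖x - y‖ + ‖(α * m) • u‖ := by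
      rw [hdiff]; exact norm_add_le (x - y) ((α * m) • u)
    have h2 : ‖(α * m) • u‖ = |α * m| * ‖u‖ := by
      rw [norm_smul, Real.norm_eq_abs]
    have h3 := hkey x y
    rw [← hu] at h3
    rw [h2] at h1
    linarith
  · intro x y
    have hdiff : Bm x - Bm y = (x - y) + (α * m) • (T ((m:ℝ)⁻¹ • x) - T ((m:ℝ)⁻¹ • y)) := by
      rw [hBm x, hBm y, smul_sub]; abel
    set u := T ((m:ℝ)⁻¹ • x) - T ((m:ℝ)⁻¹ • y) with hu
    have hinner : (inner ℝ (Bm x - Bm y) (x - y) : ℝ)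
        = ‖x - y‖^2 + (α * m) * (inner ℝ u (x - y) : ℝ) := by
      rw [hdiff, inner_add_left, real_inner_smul_left, real_inner_self_eq_norm_sq]
    have habs : |(α * m) * (inner ℝ u (x - y) : ℝ)| ≤ |α * m| * (‖u‖ * ‖x - y‖) := by
      rw [abs_mul]
      exact mul_le_mul_of_nonneg_left (abs_real_inner_le_norm u (x - y)) (abs_nonneg _)
    have hb : |α * m| * (‖u‖ * ‖x - y‖) ≤ ‖x - y‖ * ‖x - y‖ := by
      have := hkey x y
      have h0 : 0 ≤ ‖x - y‖ := norm_nonneg _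
      nlinarith
    rw [hinner]
    have := abs_le.1 habs
    nlinarith [this.1, sq_nonneg ‖x - y‖]
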